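/- Let A be a commutative ring, I a set, R = A[(X_i)_{i∈I}] the polynomial ring, G a commutative group, ψ : ℤ^(⊕I) → G a surjective group homomorphism, H ≤ G a subgroup of finite index, and S = R_(H). Let 𝔞, 𝔟 ⊆ R be finitely generated monomial ideals. Then the following statements are equivalent: (i) Γ_{𝔞_(H)} = Γ_{𝔟_(H)} (equality of torsion functors over S, i.e., Γ_{𝔞_(H)}(M) = Γ_{𝔟_(H)}(M) for every S-module M); (ii) √𝔞 = √𝔟; (iii) ⌊𝔞⌋ = ⌊𝔟⌋; (iv) ⌊𝔞⌋_(H) = ⌊𝔟⌋_(H). (Proposition 2.40 a).) -/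

import Mathlib

set_option synthInstance.maxHeartbeats 1000000
set_option maxHeartbeats 1000000

open MvPolynomial

/-- `suppInd μ` is the characteristic function of the support of `μ`,
so that `X^(suppInd μ) = ∏_{i : μ i > 0} X i`. -/
noncomputable def suppInd {I : Type v} (μ : I →₀ ℕ) : I →₀ ℕ :=
  μ.mapRange (fun n => if n = 0 then 0 else 1) (by simp)

/-- The canonical embedding `ℕ^(⊕I) → ℤ^(⊕I)`. -/
noncomputable def natToInt {I : Type v} (μ : I →₀ ℕ) : I →₀ ℤ :=
  Finsupp.mapRange (Nat.cast : ℕ → ℤ) Nat.cast_zero μ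

/-- A monomial ideal of `A[(X_i)_{i ∈ I}]` is an ideal generated by a set of monomials. -/
def IsMonomialIdeal {A : Type u} [CommRing A] {I : Type v}
    (𝔞 : Ideal (MvPolynomial I A)) : Prop :=
  ∃ E : Set (I →₀ ℕ), 𝔞 = Ideal.span ((fun μ => monomial μ (1 : A)) '' E)

/-- `⌊𝔞⌋` is the ideal generated by the monomials `X^(suppInd μ)` for all monomials
`X^μ ∈ 𝔞`. -/
noncomputable def mvFloor {A : Type u} [CommRing A] {I : Type v}
    (𝔞 : Ideal (MvPolynomial I A)) : Ideal (MvPolynomial I A) :=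
  Ideal.span {f | ∃ μ : I →₀ ℕ, monomial μ (1 : A) ∈ 𝔞 ∧ f = monomial (suppInd μ) (1 : A)}

/-- The degree restriction `S = R_(H)` of `R = A[(X_i)_{i ∈ I}]` (graded via
`ψ : ℤ^(⊕I) → G`) to a subgroup `H ≤ G`: the `A`-subalgebra of `R` generated by the
monomials `X^μ` whose degree `ψ(μ)` lies in `H`. -/
noncomputable def degRestrict (A : Type u) [CommRing A] {I : Type v} {G : Type w} [AddCommGroup G]
    (ψ : (I →₀ ℤ) →+ G) (H : AddSubgroup G) : Subalgebra A (MvPolynomial I A) :=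
  Algebra.adjoin A {f | ∃ μ : I →₀ ℕ, ψ (natToInt μ) ∈ H ∧ f = monomial μ (1 : A)}

/-- The degree restriction `𝔠_(H) = 𝔠 ∩ S` of an ideal `𝔠` of `R`, as an ideal of
`S = R_(H)`. -/
noncomputable def idealRestrict {A : Type u} [CommRing A] {I : Type v} {G : Type w} [AddCommGroup G]
    (ψ : (I →₀ ℤ) →+ G) (H : AddSubgroup G) (𝔠 : Ideal (MvPolynomial I A)) :
    Ideal (degRestrict A ψ H) :=
  Ideal.comap (degRestrict A ψ H).val 𝔠

/-- `E(𝔞)`: the set of minimal elements of `{μ ∈ ℕ^(⊕I) | X^μ ∈ 𝔞}` with respect to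
the componentwise order. -/
def Emin {A : Type u} [CommRing A] {I : Type v} (𝔞 : Ideal (MvPolynomial I A)) :
    Set (I →₀ ℕ) :=
  {μ | monomial μ (1 : A) ∈ 𝔞 ∧ ∀ ν : I →₀ ℕ, monomial ν (1 : A) ∈ 𝔞 → ν ≤ μ → ν = μ}

/-- `m_μ`: the least `m ∈ ℕ` such that `X^(m • suppInd μ) ∈ 𝔞_(H) = 𝔞 ∩ S`. -/
noncomputable def mdeg {A : Type u} [CommRing A] {I : Type v} {G : Type w} [AddCommGroup G]
    (ψ : (I →₀ ℤ) →+ G) (H : AddSubgroup G) (𝔞 : Ideal (MvPolynomial I A))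
    (μ : I →₀ ℕ) : ℕ :=
  sInf {m : ℕ | monomial (m • suppInd μ) (1 : A) ∈ 𝔞 ∧
    monomial (m • suppInd μ) (1 : A) ∈ degRestrict A ψ H}

/-- `⌊𝔞⌋_H`: the ideal of `S = R_(H)` generated by the monomials `X^(m_μ • suppInd μ)`
for `μ ∈ E(𝔞)`. -/
noncomputable def floorH {A : Type u} [CommRing A] {I : Type v} {G : Type w} [AddCommGroup G]
    (ψ : (I →₀ ℤ) →+ G) (H : AddSubgroup G) (𝔞 : Ideal (MvPolynomial I A)) :
    Ideal (degRestrict A ψ H) :=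
  Ideal.span {s | ∃ μ ∈ Emin 𝔞,
    (s : MvPolynomial I A) = monomial (mdeg ψ H 𝔞 μ • suppInd μ) (1 : A)}

section Aux

variable {A : Type u} [CommRing A] {I : Type v}

/-- Divisibility: a monomial ideal containing `X^ν` contains `X^λ` for `ν ≤ λ`. -/
theorem aux_mono_mem_of_le {𝔠 : Ideal (MvPolynomial I A)} {ν lam : I →₀ ℕ}
    (h : monomial ν (1 : A) ∈ 𝔠) (hle : ν ≤ lam) : monomial lam (1 : A) ∈ 𝔠 := by
  have heq : monomial lam (1 : A) = monomial (lam - ν) 1 * monomial ν 1 := by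
    rw [monomial_mul, one_mul, tsub_add_cancel_of_le hle]
  rw [heq]
  exact Ideal.mul_mem_left _ _ h

/-- The key combinatorial relation between monomial ideals. -/
def QRel (𝔞 𝔟 : Ideal (MvPolynomial I A)) : Prop :=
  ∀ μ : I →₀ ℕ, monomial μ (1 : A) ∈ 𝔞 →
    ∃ ν : I →₀ ℕ, monomial ν (1 : A) ∈ 𝔟 ∧ ν.support ⊆ μ.support

theorem aux_le_smul {μ : I →₀ ℕ} {c : ℕ} (hc : c ≠ 0) : μ ≤ c • μ := by
  rw [Finsupp.le_def]
  intro i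
  rw [Finsupp.smul_apply, smul_eq_mul]
  exact Nat.le_mul_of_pos_left _ (Nat.pos_of_ne_zero hc)

theorem aux_suppInd_support (μ : I →₀ ℕ) : (suppInd μ).support = μ.support := by
  ext i
  simp only [Finsupp.mem_support_iff, suppInd, Finsupp.mapRange_apply]
  by_cases h : μ i = 0 <;> simp [h]

theorem aux_suppInd_le_suppInd {ν μ : I →₀ ℕ} (h : ν.support ⊆ μ.support) :
    suppInd ν ≤ suppInd μ := by
  rw [Finsupp.le_def]
  intro i
  simp only [suppInd, Finsupp.mapRange_apply]
  by_cases hν : ν i = 0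
  · simp [hν]
  · have : μ i ≠ 0 := by
      have := h (Finsupp.mem_support_iff.mpr hν)
      exact Finsupp.mem_support_iff.mp this
    simp [hν, this]

theorem aux_le_radical_of_QRel {𝔞 𝔟 : Ideal (MvPolynomial I A)} (h𝔞 : IsMonomialIdeal 𝔞)
    (hQ : QRel 𝔞 𝔟) : 𝔞 ≤ 𝔟.radical := by
  obtain ⟨E, hE⟩ := h𝔞
  conv_lhs => rw [hE]
  rw [Ideal.span_le]
  rintro f ⟨μ, hμE, rfl⟩
  have hμ𝔞 : monomial μ (1 : A) ∈ 𝔞 := by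
    rw [hE]; exact Ideal.subset_span ⟨μ, hμE, rfl⟩
  obtain ⟨ν, hν𝔟, hsupp⟩ := hQ μ hμ𝔞
  set k : ℕ := (ν.support.sum ν) + 1 with hk
  have hle : ν ≤ k • μ := by
    rw [Finsupp.le_def]
    intro i
    by_cases hνi : ν i = 0
    · rw [hνi]; exact Nat.zero_le _
    · have hi : i ∈ ν.support := Finsupp.mem_support_iff.mpr hνi
      have h1 : ν i ≤ ν.support.sum ν := Finset.single_le_sum (fun j _ => Nat.zero_le (ν j)) hi
      have hμi : 1 ≤ μ i := by
        have := hsupp hi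
        exact Nat.pos_of_ne_zero (Finsupp.mem_support_iff.mp this)
      calc ν i ≤ k := le_trans h1 (Nat.le_succ _)
        _ = k * 1 := (mul_one k).symm
        _ ≤ k * μ i := Nat.mul_le_mul_left k hμi
        _ = (k • μ) i := by rw [Finsupp.smul_apply, smul_eq_mul]
  refine ⟨k, ?_⟩
  rw [monomial_pow, one_pow]
  exact aux_mono_mem_of_le hν𝔟 hle

theorem aux_QRel_of_le_radical {𝔞 𝔟 : Ideal (MvPolynomial I A)} (h : 𝔞 ≤ 𝔟.radical) :
    QRel 𝔞 𝔟 := by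
  intro μ hμ
  obtain ⟨n, hn⟩ := h hμ
  rw [monomial_pow, one_pow] at hn
  exact ⟨n • μ, hn, Finsupp.support_smul⟩

theorem aux_mvFloor_eq (𝔞 : Ideal (MvPolynomial I A)) :
    mvFloor 𝔞 = Ideal.span ((fun d => monomial d (1 : A)) ''
      (suppInd '' {μ : I →₀ ℕ | monomial μ (1 : A) ∈ 𝔞})) := by
  unfold mvFloor
  congr 1
  ext f
  constructor
  · rintro ⟨μ, hμ, rfl⟩
    exact ⟨suppInd μ, ⟨μ, hμ, rfl⟩, rfl⟩
  · rintro ⟨d, ⟨μ, hμ, rfl⟩, rfl⟩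
    exact ⟨μ, hμ, rfl⟩

theorem aux_mvFloor_le_of_QRel {𝔞 𝔟 : Ideal (MvPolynomial I A)} (hQ : QRel 𝔞 𝔟) :
    mvFloor 𝔞 ≤ mvFloor 𝔟 := by
  rw [mvFloor, Ideal.span_le]
  rintro f ⟨μ, hμ, rfl⟩
  obtain ⟨ν, hν, hs⟩ := hQ μ hμ
  have hgen : monomial (suppInd ν) (1 : A) ∈ mvFloor 𝔟 := Ideal.subset_span ⟨ν, hν, rfl⟩
  exact aux_mono_mem_of_le hgen (aux_suppInd_le_suppInd hs)

theorem aux_QRel_of_monomial_mem_mvFloor [Nontrivial A] {𝔟 : Ideal (MvPolynomial I A)}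
    {μ τ : I →₀ ℕ} (hτ : τ.support ⊆ μ.support) (h : monomial τ (1 : A) ∈ mvFloor 𝔟) :
    ∃ ν : I →₀ ℕ, monomial ν (1 : A) ∈ 𝔟 ∧ ν.support ⊆ μ.support := by
  classical
  rw [aux_mvFloor_eq, mem_ideal_span_monomial_image] at h
  have hτs : τ ∈ (monomial τ (1 : A)).support := by
    rw [support_monomial, if_neg (one_ne_zero)]
    exact Finset.mem_singleton_self τ
  obtain ⟨si, ⟨ν, hν, rfl⟩, hle⟩ := h τ hτs
  refine ⟨ν, hν, ?_⟩
  calc ν.support = (suppInd ν).support := (aux_suppInd_support ν).symm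
    _ ⊆ τ.support := Finsupp.support_mono hle
    _ ⊆ μ.support := hτ

end Aux

section AuxH

variable {A : Type u} [CommRing A] {I : Type v} {G : Type w} [AddCommGroup G]

theorem aux_natToInt_smul (c : ℕ) (μ : I →₀ ℕ) : natToInt (c • μ) = c • natToInt μ := by
  ext i
  simp only [natToInt, Finsupp.mapRange_apply, Finsupp.smul_apply, smul_eq_mul]
  push_cast
  ring

theorem aux_monomial_mem_degRestrict (ψ : (I →₀ ℤ) →+ G) (H : AddSubgroup G) {μ : I →₀ ℕ}
    (h : ψ (natToInt μ) ∈ H) : monomial μ (1 : A) ∈ degRestrict A ψ H :=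
  Algebra.subset_adjoin ⟨μ, h, rfl⟩

theorem aux_index_smul_mem (ψ : (I →₀ ℤ) →+ G) (H : AddSubgroup G) (μ : I →₀ ℕ) :
    ψ (natToInt (H.index • μ)) ∈ H := by
  rw [aux_natToInt_smul, map_nsmul]
  exact AddSubgroup.nsmul_index_mem H _

/-- If a power of `(𝔟)_(H)` is contained in `(𝔞)_(H)`, then the `Q`-relation holds. -/
theorem aux_QRel_of_pow_le (ψ : (I →₀ ℤ) →+ G) (H : AddSubgroup G) (hH : H.FiniteIndex)
    {𝔞 𝔟 : Ideal (MvPolynomial I A)}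
    (hpow : ∃ n : ℕ, (idealRestrict ψ H 𝔟) ^ n ≤ idealRestrict ψ H 𝔞) : QRel 𝔟 𝔞 := by
  intro ν hν
  obtain ⟨n, hn⟩ := hpow
  have hc : monomial (H.index • ν) (1 : A) ∈ 𝔟 :=
    aux_mono_mem_of_le hν (aux_le_smul hH.index_ne_zero)
  have hS : monomial (H.index • ν) (1 : A) ∈ degRestrict A ψ H :=
    aux_monomial_mem_degRestrict ψ H (aux_index_smul_mem ψ H ν)
  set s : degRestrict A ψ H := ⟨monomial (H.index • ν) (1 : A), hS⟩ with hs
  have hmem : s ∈ idealRestrict ψ H 𝔟 := by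
    rw [idealRestrict, Ideal.mem_comap]
    exact hc
  have hpowmem : s ^ n ∈ (idealRestrict ψ H 𝔟) ^ n := Ideal.pow_mem_pow hmem n
  have h𝔞 := hn hpowmem
  rw [idealRestrict, Ideal.mem_comap, map_pow] at h𝔞
  have hval : ((degRestrict A ψ H).val s : MvPolynomial I A) = monomial (H.index • ν) (1 : A) := rfl
  rw [hval, monomial_pow, one_pow] at h𝔞
  exact ⟨n • H.index • ν, h𝔞, subset_trans Finsupp.support_smul Finsupp.support_smul⟩

end AuxH

/-- (Proposition 2.40 a)): for finitely generated monomial ideals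
`𝔞, 𝔟` of `R = A[(X_i)_{i ∈ I}]` and `H ≤ G` of finite index, the following are
equivalent: (i) `Γ_{𝔞_(H)} = Γ_{𝔟_(H)}` over `S = R_(H)`; (ii) `√𝔞 = √𝔟`;
(iii) `⌊𝔞⌋ = ⌊𝔟⌋`; (iv) `⌊𝔞⌋_(H) = ⌊𝔟⌋_(H)`. -/
theorem torsion_restrict_eq_iff_radical_eq_iff_floor_eq_iff_floorRestrict_eq
    {A : Type u} [CommRing A] {I : Type v}
    {G : Type w} [AddCommGroup G] (ψ : (I →₀ ℤ) →+ G) (hψ : Function.Surjective ψ)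
    (H : AddSubgroup G) (hH : H.FiniteIndex)
    (𝔞 𝔟 : Ideal (MvPolynomial I A)) (h𝔞 : IsMonomialIdeal 𝔞) (h𝔟 : IsMonomialIdeal 𝔟)
    (hfg𝔞 : 𝔞.FG) (hfg𝔟 : 𝔟.FG) :
    List.TFAE
      [∀ (M : Type (max u v)) [AddCommGroup M] [Module (degRestrict A ψ H) M] (x : M),
          (∃ n : ℕ, (idealRestrict ψ H 𝔞) ^ n ≤ Ideal.torsionOf (degRestrict A ψ H) M x) ↔
            (∃ n : ℕ, (idealRestrict ψ H 𝔟) ^ n ≤ Ideal.torsionOf (degRestrict A ψ H) M x),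
        𝔞.radical = 𝔟.radical,
        mvFloor 𝔞 = mvFloor 𝔟,
        idealRestrict ψ H (mvFloor 𝔞) = idealRestrict ψ H (mvFloor 𝔟)] := by
  rcases subsingleton_or_nontrivial A with hA | hA
  · -- trivial ring: everything holds
    have h𝔞𝔟 : 𝔞 = 𝔟 := by
      ext x
      have hx : x = 0 := Subsingleton.elim x 0
      simp [hx]
    apply List.tfae_of_forall True
    intro p hp
    simp only [List.mem_cons, List.not_mem_nil, or_false] at hp
    rcases hp with rfl | rfl | rfl | rfl
    · exact iff_true_intro (fun M _ _ x => by rw [h𝔞𝔟])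
    · exact iff_true_intro (by rw [h𝔞𝔟])
    · exact iff_true_intro (by rw [h𝔞𝔟])
    · exact iff_true_intro (by rw [h𝔞𝔟])
  · have key : ∀ (𝔠 𝔡 : Ideal (MvPolynomial I A)) (n : ℕ), 𝔠 ^ n ≤ 𝔡 →
        (idealRestrict ψ H 𝔠) ^ n ≤ idealRestrict ψ H 𝔡 := by
      intro 𝔠 𝔡 n h
      calc (idealRestrict ψ H 𝔠) ^ n
          ≤ Ideal.comap (degRestrict A ψ H).val (𝔠 ^ n) := Ideal.le_comap_pow _ n
        _ ≤ idealRestrict ψ H 𝔡 := Ideal.comap_mono h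
    tfae_have 2 → 1 := by
      intro h2
      obtain ⟨na, hna⟩ : ∃ n : ℕ, 𝔞 ^ n ≤ 𝔟 :=
        Ideal.exists_pow_le_of_le_radical_of_fg (le_trans Ideal.le_radical h2.le) hfg𝔞
      obtain ⟨nb, hnb⟩ : ∃ n : ℕ, 𝔟 ^ n ≤ 𝔞 :=
        Ideal.exists_pow_le_of_le_radical_of_fg (le_trans Ideal.le_radical h2.ge) hfg𝔟
      intro M _ _ x
      constructor
      · rintro ⟨n, hn⟩
        refine ⟨nb * n, ?_⟩
        rw [pow_mul]
        exact le_trans (Ideal.pow_right_mono (key 𝔟 𝔞 nb hnb) n) hn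
      · rintro ⟨n, hn⟩
        refine ⟨na * n, ?_⟩
        rw [pow_mul]
        exact le_trans (Ideal.pow_right_mono (key 𝔞 𝔟 na hna) n) hn
    tfae_have 1 → 2 := by
      intro h1
      have hpow : ∀ (𝔠 𝔡 : Ideal (MvPolynomial I A)),
          (∀ (M : Type (max u v)) [AddCommGroup M] [Module (degRestrict A ψ H) M] (x : M),
            ((∃ n : ℕ, (idealRestrict ψ H 𝔠) ^ n ≤ Ideal.torsionOf (degRestrict A ψ H) M x) ↔
              (∃ n : ℕ, (idealRestrict ψ H 𝔡) ^ n ≤ Ideal.torsionOf (degRestrict A ψ H) M x))) →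
          ∃ n : ℕ, (idealRestrict ψ H 𝔡) ^ n ≤ idealRestrict ψ H 𝔠 := by
        intro 𝔠 𝔡 h
        set J := idealRestrict ψ H 𝔠 with hJ
        have hsmul : ∀ a : degRestrict A ψ H,
            a • (1 : degRestrict A ψ H ⧸ J) = Ideal.Quotient.mk J a := by
          intro a
          show Ideal.Quotient.mk J (a * 1) = Ideal.Quotient.mk J a
          rw [mul_one]
        have hx : ∃ n : ℕ, J ^ n ≤
            Ideal.torsionOf (degRestrict A ψ H) (degRestrict A ψ H ⧸ J)
              (1 : degRestrict A ψ H ⧸ J) := by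
          refine ⟨1, ?_⟩
          rw [pow_one]
          intro a ha
          rw [Ideal.mem_torsionOf_iff, hsmul, Ideal.Quotient.eq_zero_iff_mem]
          exact ha
        obtain ⟨n, hn⟩ := (h (degRestrict A ψ H ⧸ J) (1 : degRestrict A ψ H ⧸ J)).mp hx
        refine ⟨n, fun a ha => ?_⟩
        have hmem := hn ha
        rw [Ideal.mem_torsionOf_iff, hsmul, Ideal.Quotient.eq_zero_iff_mem] at hmem
        exact hmem
      have hQba : QRel 𝔟 𝔞 := aux_QRel_of_pow_le ψ H hH (hpow 𝔞 𝔟 h1)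
      have hQab : QRel 𝔞 𝔟 :=
        aux_QRel_of_pow_le ψ H hH (hpow 𝔟 𝔞 (fun M _ _ x => (h1 M x).symm))
      apply le_antisymm
      · have h := Ideal.radical_mono (aux_le_radical_of_QRel h𝔞 hQab)
        rwa [Ideal.radical_idem] at h
      · have h := Ideal.radical_mono (aux_le_radical_of_QRel h𝔟 hQba)
        rwa [Ideal.radical_idem] at h
    tfae_have 2 → 3 := by
      intro h2
      have hQab := aux_QRel_of_le_radical (𝔞 := 𝔞) (𝔟 := 𝔟) (le_trans Ideal.le_radical h2.le)
      have hQba := aux_QRel_of_le_radical (𝔞 := 𝔟) (𝔟 := 𝔞) (le_trans Ideal.le_radical h2.ge)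
      exact le_antisymm (aux_mvFloor_le_of_QRel hQab) (aux_mvFloor_le_of_QRel hQba)
    tfae_have 3 → 4 := by
      intro h3
      rw [h3]
    tfae_have 4 → 2 := by
      intro h4
      have hQ : ∀ 𝔠 𝔡 : Ideal (MvPolynomial I A),
          idealRestrict ψ H (mvFloor 𝔠) = idealRestrict ψ H (mvFloor 𝔡) → QRel 𝔠 𝔡 := by
        intro 𝔠 𝔡 h μ hμ
        have hfloor : monomial (H.index • suppInd μ) (1 : A) ∈ mvFloor 𝔠 :=
          aux_mono_mem_of_le (Ideal.subset_span ⟨μ, hμ, rfl⟩) (aux_le_smul hH.index_ne_zero)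
        have hS : monomial (H.index • suppInd μ) (1 : A) ∈ degRestrict A ψ H :=
          aux_monomial_mem_degRestrict ψ H (aux_index_smul_mem ψ H _)
        have hmem : (⟨_, hS⟩ : degRestrict A ψ H) ∈ idealRestrict ψ H (mvFloor 𝔠) := by
          rw [idealRestrict, Ideal.mem_comap]
          exact hfloor
        rw [h, idealRestrict, Ideal.mem_comap] at hmem
        have h𝔡 : monomial (H.index • suppInd μ) (1 : A) ∈ mvFloor 𝔡 := hmem
        refine aux_QRel_of_monomial_mem_mvFloor ?_ h𝔡
        calc (H.index • suppInd μ).support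
            ⊆ (suppInd μ).support := Finsupp.support_smul
          _ = μ.support := aux_suppInd_support μ
      have hQab := hQ 𝔞 𝔟 h4
      have hQba := hQ 𝔟 𝔞 h4.symm
      apply le_antisymm
      · have h := Ideal.radical_mono (aux_le_radical_of_QRel h𝔞 hQab)
        rwa [Ideal.radical_idem] at h
      · have h := Ideal.radical_mono (aux_le_radical_of_QRel h𝔟 hQba)
        rwa [Ideal.radical_idem] at h
    tfae_finish
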